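/- Let s_1,...,s_m be points produced by Gonzalez's farthest-point algorithm on a finite set P in a metric space. If s_{j_1} and s_{j_2} (with j_1 < j_2) both lie in a cluster C of diameter-bound 2r (i.e., C is contained in a ball of radius r), then for every point p ∈ P, min_{1 ≤ l ≤ j_2 - 1} dist(p, s_l) ≤ 2r. -/
import Mathlib

/-- if two Gonzalez-selected points `s j₁, s j₂` (`j₁ < j₂`) lie in a common
ball of radius `r`, then every point of `P` is within distance `2r` of one of the first
`j₂` selected points (i.e. of some `s l` with `l < j₂`). -/
theorem stmt5 {X : Type*} [MetricSpace X] (P : Finset X) {m : ℕ} (s : Fin m → X)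
    (hsP : ∀ j, s j ∈ P)
    (hGon : ∀ j : Fin m, ∀ p ∈ P, ∀ l, l < j →
      ∃ l', l' < j ∧ dist p (s l') ≤ dist (s j) (s l))
    (j₁ j₂ : Fin m) (h12 : j₁ < j₂) (c : X) (r : ℝ)
    (h1 : dist (s j₁) c ≤ r) (h2 : dist (s j₂) c ≤ r) :
    ∀ p ∈ P, ∃ l, l < j₂ ∧ dist p (s l) ≤ 2 * r := by
  intro p hp
  obtain ⟨l', hl', hd⟩ := hGon j₂ p hp j₁ h12
  refine ⟨l', hl', hd.trans ?_⟩
  calc dist (s j₂) (s j₁) ≤ dist (s j₂) c + dist c (s j₁) := dist_triangle _ _ _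
    _ ≤ r + r := by rw [dist_comm c]; exact add_le_add h2 h1
    _ = 2 * r := by ring
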